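/- (Relation between influence matrix and covariance matrix.) Let ρ be a probability measure on Ω_0 ⊂ {0,1}^{qn} (one-hot blocks) with ρ(η^i_a = 1) > 0 for all i,a. Define the influence matrix J[ρ] by J(i,a;i,b) = 0 and J(i,a;j,b) = ρ(η^j_b=1 | η^i_a=1) − ρ(η^j_b=1) for i ≠ j. Then all eigenvalues of J[ρ] are real, and the maximum eigenvalue of the covariance matrix Cov[ρ] satisfies λ(Cov[ρ]) ≤ λ(J[ρ]) + 1/2. -/

import Mathlib

open Finset Matrix
open scoped Classical

noncomputable section

variable (n q : ℕ)

/-- Marginal probability `p^i_a = ρ(σ i = a)` of the one-hot variable `η^i_a`. -/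
def marg (ρ : (Fin n → Fin q) → ℝ) (i : Fin n) (a : Fin q) : ℝ :=
  ∑ σ, ρ σ * (if σ i = a then (1 : ℝ) else 0)

/-- Pair probability `ρ(η^i_a = 1, η^j_b = 1)`. -/
def pairProb (ρ : (Fin n → Fin q) → ℝ) (p p' : Fin n × Fin q) : ℝ :=
  ∑ σ, ρ σ * ((if σ p.1 = p.2 then (1 : ℝ) else 0) *
    (if σ p'.1 = p'.2 then (1 : ℝ) else 0))

/-- Covariance matrix of the one-hot encoding. -/
def covMat (ρ : (Fin n → Fin q) → ℝ) :
    Matrix (Fin n × Fin q) (Fin n × Fin q) ℝ :=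
  fun p p' => pairProb n q ρ p p' - marg n q ρ p.1 p.2 * marg n q ρ p'.1 p'.2

/-- Influence matrix `J[ρ]`: zero on diagonal blocks, and
`J(i,a;j,b) = ρ(η^j_b = 1 | η^i_a = 1) − ρ(η^j_b = 1)` for `i ≠ j`. -/
def inflMat (ρ : (Fin n → Fin q) → ℝ) :
    Matrix (Fin n × Fin q) (Fin n × Fin q) ℝ :=
  fun p p' => if p.1 = p'.1 then 0
    else pairProb n q ρ p p' / marg n q ρ p.1 p.2 - marg n q ρ p'.1 p'.2

/-! ### Auxiliary lemmas -/

lemma pairProb_comm (ρ : (Fin n → Fin q) → ℝ) (p p' : Fin n × Fin q) :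
    pairProb n q ρ p p' = pairProb n q ρ p' p :=
  Finset.sum_congr rfl fun σ _ => by ring

lemma pairProb_diag (ρ : (Fin n → Fin q) → ℝ) (i : Fin n) (a b : Fin q) :
    pairProb n q ρ (i, a) (i, b) = if a = b then marg n q ρ i a else 0 := by
  by_cases hab : a = b
  · subst hab
    simp only [if_pos rfl, pairProb, marg]
    exact Finset.sum_congr rfl fun σ _ => by by_cases h : σ i = a <;> simp [h]
  · simp only [if_neg hab, pairProb]
    apply Finset.sum_eq_zero
    intro σ _
    by_cases h : σ i = a
    · have h2 : σ i ≠ b := fun hb => hab (h ▸ hb)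
      simp [h, h2, hab]
    · simp [h]

lemma sum_marg (ρ : (Fin n → Fin q) → ℝ) (hρ1 : ∑ σ, ρ σ = 1) (i : Fin n) :
    ∑ a, marg n q ρ i a = 1 := by
  unfold marg
  rw [Finset.sum_comm]
  have h : ∀ σ : Fin n → Fin q, ∑ a, ρ σ * (if σ i = a then (1:ℝ) else 0) = ρ σ := by
    intro σ
    rw [← Finset.mul_sum]
    simp [Finset.sum_ite_eq]
  simp only [h]
  exact hρ1

lemma marg_le_one (ρ : (Fin n → Fin q) → ℝ) (hρ : ∀ σ, 0 ≤ ρ σ) (hρ1 : ∑ σ, ρ σ = 1)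
    (i : Fin n) (a : Fin q) : marg n q ρ i a ≤ 1 := by
  rw [← hρ1]
  apply Finset.sum_le_sum
  intro σ _
  by_cases h : σ i = a <;> simp [h, hρ σ]

/-- Variance of a function with respect to a probability vector is at most half
the sum of squares. -/
lemma var_bound {q : ℕ} (p u : Fin q → ℝ) (hp : ∀ a, 0 ≤ p a) (hp1 : ∑ a, p a = 1) :
    ∑ a, p a * u a ^ 2 - (∑ a, p a * u a) ^ 2 ≤ (1 / 2) * ∑ a, u a ^ 2 := by
  have hq : Nonempty (Fin q) := by
    rcases Nat.eq_zero_or_pos q with h | h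
    · subst h; simp at hp1
    · exact ⟨⟨0, h⟩⟩
  obtain ⟨a₀, -, hM⟩ := Finset.exists_mem_eq_sup' Finset.univ_nonempty u
  obtain ⟨b₀, -, hm⟩ := Finset.exists_mem_eq_inf' Finset.univ_nonempty u
  set M := Finset.univ.sup' Finset.univ_nonempty u with hMdef
  set m := Finset.univ.inf' Finset.univ_nonempty u with hmdef
  set c : ℝ := (M + m) / 2 with hc
  have key1 : ∀ a, (u a - c) ^ 2 ≤ ((M - m) / 2) ^ 2 := by
    intro a
    have h1 : u a ≤ M := Finset.le_sup' u (Finset.mem_univ a)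
    have h2 : m ≤ u a := Finset.inf'_le u (Finset.mem_univ a)
    nlinarith
  have expand : ∑ a, p a * (u a - c) ^ 2
      = (∑ a, p a * u a ^ 2) - 2 * c * (∑ a, p a * u a) + c ^ 2 * (∑ a, p a) := by
    rw [Finset.mul_sum, Finset.mul_sum, ← Finset.sum_sub_distrib, ← Finset.sum_add_distrib]
    exact Finset.sum_congr rfl fun a _ => by ring
  have step1 : ∑ a, p a * u a ^ 2 - (∑ a, p a * u a) ^ 2 ≤ ∑ a, p a * (u a - c) ^ 2 := by
    rw [expand, hp1]
    nlinarith [sq_nonneg ((∑ a, p a * u a) - c)]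
  have step2 : ∑ a, p a * (u a - c) ^ 2 ≤ ((M - m) / 2) ^ 2 := by
    calc ∑ a, p a * (u a - c) ^ 2 ≤ ∑ a, p a * ((M - m) / 2) ^ 2 :=
          Finset.sum_le_sum fun a _ => mul_le_mul_of_nonneg_left (key1 a) (hp a)
      _ = ((M - m) / 2) ^ 2 := by rw [← Finset.sum_mul, hp1, one_mul]
  by_cases hab : a₀ = b₀
  · have hMm : M = m := by rw [hM, hab, ← hm]
    have h0 : ((M - m) / 2) ^ 2 = 0 := by rw [hMm]; ring
    have hpos : 0 ≤ ∑ a, u a ^ 2 := Finset.sum_nonneg fun a _ => sq_nonneg _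
    linarith
  · have hsum : M ^ 2 + m ^ 2 ≤ ∑ a, u a ^ 2 := by
      have hsub : ({a₀, b₀} : Finset (Fin q)) ⊆ Finset.univ := Finset.subset_univ _
      have h := Finset.sum_le_sum_of_subset_of_nonneg hsub
        (fun i _ _ => sq_nonneg (u i))
      rwa [Finset.sum_pair hab, ← hM, ← hm] at h
    nlinarith [sq_nonneg (M + m)]

/-- The square roots of the marginals. -/
def eVec (ρ : (Fin n → Fin q) → ℝ) : Fin n × Fin q → ℝ :=
  fun p => Real.sqrt (marg n q ρ p.1 p.2)

/-- The symmetrization `D^{1/2} J D^{-1/2}` of the influence matrix. -/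
def symMat (ρ : (Fin n → Fin q) → ℝ) :
    Matrix (Fin n × Fin q) (Fin n × Fin q) ℝ :=
  fun p p' => eVec n q ρ p * inflMat n q ρ p p' * (eVec n q ρ p')⁻¹

lemma symMat_apply_ne (ρ : (Fin n → Fin q) → ℝ) (hmarg : ∀ i a, 0 < marg n q ρ i a)
    {p p' : Fin n × Fin q} (h : p.1 ≠ p'.1) :
    symMat n q ρ p p' = pairProb n q ρ p p' / (eVec n q ρ p * eVec n q ρ p')
      - eVec n q ρ p * eVec n q ρ p' := by
  have hx : eVec n q ρ p ^ 2 = marg n q ρ p.1 p.2 := Real.sq_sqrt (hmarg _ _).le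
  have hy : eVec n q ρ p' ^ 2 = marg n q ρ p'.1 p'.2 := Real.sq_sqrt (hmarg _ _).le
  have hxne : eVec n q ρ p ≠ 0 := (Real.sqrt_pos.mpr (hmarg _ _)).ne'
  have hyne : eVec n q ρ p' ≠ 0 := (Real.sqrt_pos.mpr (hmarg _ _)).ne'
  unfold symMat inflMat
  rw [if_neg h, ← hx, ← hy]
  field_simp

lemma symMat_apply_eq (ρ : (Fin n → Fin q) → ℝ) {p p' : Fin n × Fin q} (h : p.1 = p'.1) :
    symMat n q ρ p p' = 0 := by
  unfold symMat inflMat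
  rw [if_pos h, mul_zero, zero_mul]

lemma symMat_isHermitian (ρ : (Fin n → Fin q) → ℝ) (hmarg : ∀ i a, 0 < marg n q ρ i a) :
    (symMat n q ρ).IsHermitian := by
  ext p p'
  rw [Matrix.conjTranspose_apply, star_trivial]
  by_cases h : p.1 = p'.1
  · rw [symMat_apply_eq n q ρ h, symMat_apply_eq n q ρ h.symm]
  · rw [symMat_apply_ne n q ρ hmarg h, symMat_apply_ne n q ρ hmarg (Ne.symm h),
      pairProb_comm, mul_comm]

lemma diag_conj (ρ : (Fin n → Fin q) → ℝ) :
    diagonal (eVec n q ρ) * inflMat n q ρ * diagonal (fun p => (eVec n q ρ p)⁻¹)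
      = symMat n q ρ := by
  ext p p'
  rw [Matrix.mul_diagonal, Matrix.diagonal_mul]
  rfl

lemma diag_conj_complex (ρ : (Fin n → Fin q) → ℝ) :
    diagonal (fun p => ((eVec n q ρ p : ℝ) : ℂ)) * (inflMat n q ρ).map (fun x : ℝ => (x : ℂ))
      * diagonal (fun p => (((eVec n q ρ p)⁻¹ : ℝ) : ℂ))
      = (symMat n q ρ).map (fun x : ℝ => (x : ℂ)) := by
  ext p p'
  rw [Matrix.mul_diagonal, Matrix.diagonal_mul, Matrix.map_apply, Matrix.map_apply]
  show (eVec n q ρ p : ℂ) * (inflMat n q ρ p p' : ℂ) * ((eVec n q ρ p')⁻¹ : ℝ)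
      = ((eVec n q ρ p * inflMat n q ρ p p' * (eVec n q ρ p')⁻¹ : ℝ) : ℂ)
  push_cast
  ring

lemma symMat_complex_isHermitian (ρ : (Fin n → Fin q) → ℝ)
    (hmarg : ∀ i a, 0 < marg n q ρ i a) :
    ((symMat n q ρ).map (fun x : ℝ => (x : ℂ))).IsHermitian := by
  have hS := symMat_isHermitian n q ρ hmarg
  ext p p'
  rw [Matrix.conjTranspose_apply, Matrix.map_apply, Matrix.map_apply]
  have h1 : symMat n q ρ p' p = symMat n q ρ p p' := by
    have h2 := congrFun (congrFun hS p) p'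
    rwa [Matrix.conjTranspose_apply, star_trivial] at h2
  rw [← h1]
  exact Complex.conj_ofReal _

open Pointwise in
/-- The eigenvalues of the influence matrix are real, and the maximum eigenvalue of
the covariance matrix is at most that of the influence matrix plus `1/2`. -/
theorem influenceCovariance (ρ : (Fin n → Fin q) → ℝ)
    (hρ : ∀ σ, 0 ≤ ρ σ) (hρ1 : ∑ σ, ρ σ = 1)
    (hmarg : ∀ i a, 0 < marg n q ρ i a) :
    (∀ z ∈ spectrum ℂ ((inflMat n q ρ).map (fun x : ℝ => (x : ℂ))), z.im = 0) ∧
    ∀ K : ℝ, (∀ t ∈ spectrum ℝ (inflMat n q ρ), t ≤ K) →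
      ∀ u : Fin n × Fin q → ℝ,
        u ⬝ᵥ (covMat n q ρ) *ᵥ u ≤ (K + 1 / 2) * (u ⬝ᵥ u) := by
  have hepos : ∀ p : Fin n × Fin q, 0 < eVec n q ρ p :=
    fun p => Real.sqrt_pos.mpr (hmarg _ _)
  have hene : ∀ p, eVec n q ρ p ≠ 0 := fun p => (hepos p).ne'
  have hesq : ∀ p : Fin n × Fin q, eVec n q ρ p ^ 2 = marg n q ρ p.1 p.2 :=
    fun p => Real.sq_sqrt (hmarg _ _).le
  have hS := symMat_isHermitian n q ρ hmarg
  -- real similarity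
  have hm1 : diagonal (eVec n q ρ) * diagonal (fun p => (eVec n q ρ p)⁻¹) = 1 := by
    rw [Matrix.diagonal_mul_diagonal]
    have : (fun p => eVec n q ρ p * (eVec n q ρ p)⁻¹) = fun _ => (1:ℝ) :=
      funext fun p => mul_inv_cancel₀ (hene p)
    rw [this, Matrix.diagonal_one]
  have hm2 : diagonal (fun p => (eVec n q ρ p)⁻¹) * diagonal (eVec n q ρ) = 1 := by
    rw [Matrix.diagonal_mul_diagonal]
    have : (fun p => (eVec n q ρ p)⁻¹ * eVec n q ρ p) = fun _ => (1:ℝ) :=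
      funext fun p => inv_mul_cancel₀ (hene p)
    rw [this, Matrix.diagonal_one]
  have hspecR : spectrum ℝ (symMat n q ρ) = spectrum ℝ (inflMat n q ρ) := by
    rw [← diag_conj n q ρ]
    exact spectrum.units_conjugate
      (u := ⟨diagonal (eVec n q ρ), diagonal (fun p => (eVec n q ρ p)⁻¹), hm1, hm2⟩)
  constructor
  · -- real spectrum
    intro z hz
    have hSC := symMat_complex_isHermitian n q ρ hmarg
    have hcm1 : diagonal (fun p => ((eVec n q ρ p : ℝ) : ℂ))
        * diagonal (fun p => (((eVec n q ρ p)⁻¹ : ℝ) : ℂ)) = 1 := by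
      rw [Matrix.diagonal_mul_diagonal]
      have : (fun p => ((eVec n q ρ p : ℝ) : ℂ) * (((eVec n q ρ p)⁻¹ : ℝ) : ℂ))
          = fun _ => (1:ℂ) := funext fun p => by
        rw [← Complex.ofReal_mul, mul_inv_cancel₀ (hene p), Complex.ofReal_one]
      rw [this, Matrix.diagonal_one]
    have hcm2 : diagonal (fun p => (((eVec n q ρ p)⁻¹ : ℝ) : ℂ))
        * diagonal (fun p => ((eVec n q ρ p : ℝ) : ℂ)) = 1 := by
      rw [Matrix.diagonal_mul_diagonal]
      have : (fun p => (((eVec n q ρ p)⁻¹ : ℝ) : ℂ) * ((eVec n q ρ p : ℝ) : ℂ))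
          = fun _ => (1:ℂ) := funext fun p => by
        rw [← Complex.ofReal_mul, inv_mul_cancel₀ (hene p), Complex.ofReal_one]
      rw [this, Matrix.diagonal_one]
    have hspecC : spectrum ℂ ((symMat n q ρ).map (fun x : ℝ => (x : ℂ)))
        = spectrum ℂ ((inflMat n q ρ).map (fun x : ℝ => (x : ℂ))) := by
      rw [← diag_conj_complex n q ρ]
      exact spectrum.units_conjugate
        (u := ⟨diagonal (fun p => ((eVec n q ρ p : ℝ) : ℂ)),
               diagonal (fun p => (((eVec n q ρ p)⁻¹ : ℝ) : ℂ)), hcm1, hcm2⟩)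
    rw [← hspecC, hSC.spectral_theorem] at hz
    rw [Unitary.conjStarAlgAut_apply, Unitary.spectrum_star_right_conjugate, spectrum_diagonal] at hz
    obtain ⟨i, hi⟩ := hz
    rw [← hi]
    exact Complex.ofReal_im _
  · -- covariance bound
    intro K hK u
    rcases isEmpty_or_nonempty (Fin n × Fin q) with hE | hNE
    · haveI := hE
      simp [dotProduct]
    have heig_le : ∀ i, hS.eigenvalues i ≤ K :=
      fun i => hK _ (hspecR ▸ hS.eigenvalues_mem_spectrum_real i)
    -- trace of symMat is zero, hence K ≥ 0
    have htrace : (symMat n q ρ).trace = 0 := by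
      have h0 : ∀ p, symMat n q ρ p p = 0 := fun p => symMat_apply_eq n q ρ rfl
      simp [Matrix.trace, Matrix.diag, h0]
    have hsum_eig : ∑ i, hS.eigenvalues i = 0 := by
      have h1 : (symMat n q ρ).trace = ∑ i, hS.eigenvalues i := by
        conv_lhs => rw [hS.spectral_theorem]
        rw [Unitary.conjStarAlgAut_apply, Matrix.trace_mul_comm, ← Matrix.mul_assoc,
          Unitary.coe_star_mul_self, Matrix.one_mul, Matrix.trace_diagonal,
          RCLike.ofReal_real_eq_id, Function.id_comp]
      rw [← h1, htrace]
    have hK0 : 0 ≤ K := by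
      by_contra hneg
      push_neg at hneg
      have hcard : (0:ℝ) < (Fintype.card (Fin n × Fin q) : ℝ) := by
        exact_mod_cast Fintype.card_pos
      have h2 : ∑ i, hS.eigenvalues i ≤ ∑ _i : Fin n × Fin q, K :=
        Finset.sum_le_sum fun i _ => heig_le i
      rw [hsum_eig, Finset.sum_const, Finset.card_univ, nsmul_eq_mul] at h2
      nlinarith
    -- positive semidefiniteness of K•1 - S
    set M := algebraMap ℝ (Matrix (Fin n × Fin q) (Fin n × Fin q) ℝ) K - symMat n q ρ
      with hMdef
    have hMH : M.IsHermitian := by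
      apply Matrix.IsHermitian.sub _ hS
      rw [Matrix.algebraMap_eq_diagonal]
      exact Matrix.isHermitian_diagonal _
    have hMeig : ∀ i, 0 ≤ hMH.eigenvalues i := by
      intro i
      have hmem := hMH.eigenvalues_mem_spectrum_real i
      have hspecM : spectrum ℝ M = ({K} : Set ℝ) - spectrum ℝ (symMat n q ρ) := by
        rw [hMdef]
        exact (spectrum.singleton_sub_eq _ _).symm
      rw [hspecM] at hmem
      obtain ⟨a, ha, b, hb, hab⟩ := Set.mem_sub.mp hmem
      rw [Set.mem_singleton_iff] at ha
      have hb' : b ≤ K := hK b (hspecR ▸ hb)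
      rw [← hab, ha]
      linarith
    have hPSD := hMH.posSemidef_iff_eigenvalues_nonneg.mpr hMeig
    set v : Fin n × Fin q → ℝ := fun p => eVec n q ρ p * u p with hv
    have hquadS : v ⬝ᵥ (symMat n q ρ) *ᵥ v ≤ K * (v ⬝ᵥ v) := by
      have h0 := hPSD.dotProduct_mulVec_nonneg v
      rw [star_trivial] at h0
      have hexp : M *ᵥ v = K • v - (symMat n q ρ) *ᵥ v := by
        rw [hMdef, Matrix.sub_mulVec, Algebra.algebraMap_eq_smul_one,
          Matrix.smul_mulVec, Matrix.one_mulVec]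
      rw [hexp, dotProduct_sub, dotProduct_smul, smul_eq_mul] at h0
      linarith
    -- entrywise decomposition of the covariance matrix
    have hcov_entry : ∀ p p' : Fin n × Fin q,
        covMat n q ρ p p'
          = eVec n q ρ p * symMat n q ρ p p' * eVec n q ρ p'
            + (if p.1 = p'.1 then covMat n q ρ p p' else 0) := by
      intro p p'
      by_cases h : p.1 = p'.1
      · rw [if_pos h, symMat_apply_eq n q ρ h]; ring
      · rw [if_neg h, symMat_apply_ne n q ρ hmarg h, add_zero]
        unfold covMat
        rw [← hesq p, ← hesq p']
        field_simp [hene p, hene p']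
    have hdot : ∀ (A : Matrix (Fin n × Fin q) (Fin n × Fin q) ℝ) (w : Fin n × Fin q → ℝ),
        w ⬝ᵥ A *ᵥ w = ∑ p, ∑ p', w p * A p p' * w p' := by
      intro A w
      simp only [dotProduct, mulVec, Finset.mul_sum]
      exact Finset.sum_congr rfl fun p _ => Finset.sum_congr rfl fun p' _ =>
        (mul_assoc _ _ _).symm
    have hsplit : u ⬝ᵥ (covMat n q ρ) *ᵥ u
        = v ⬝ᵥ (symMat n q ρ) *ᵥ v
          + ∑ p, ∑ p', u p * (if p.1 = p'.1 then covMat n q ρ p p' else 0) * u p' := by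
      rw [hdot, hdot]
      rw [← Finset.sum_add_distrib]
      refine Finset.sum_congr rfl fun p _ => ?_
      rw [← Finset.sum_add_distrib]
      refine Finset.sum_congr rfl fun p' _ => ?_
      simp only [hv]
      conv_lhs => rw [hcov_entry p p']
      ring
    -- the block-diagonal part
    have hinner : ∀ (i : Fin n) (a : Fin q),
        (∑ p' : Fin n × Fin q, u (i,a) * (if i = p'.1 then covMat n q ρ (i,a) p' else 0) * u p')
          = ∑ b, u (i,a) * covMat n q ρ (i,a) (i,b) * u (i,b) := by
      intro i a
      rw [Fintype.sum_prod_type]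
      rw [Finset.sum_eq_single i]
      · simp
      · intro j _ hj
        apply Finset.sum_eq_zero
        intro b _
        rw [if_neg (Ne.symm hj), mul_zero, zero_mul]
      · intro h; exact absurd (Finset.mem_univ i) h
    have hblocki : ∀ i : Fin n,
        (∑ a, ∑ b, u (i,a) * covMat n q ρ (i,a) (i,b) * u (i,b))
          = ∑ a, marg n q ρ i a * u (i,a) ^ 2 - (∑ a, marg n q ρ i a * u (i,a)) ^ 2 := by
      intro i
      have hcd : ∀ a b : Fin q, covMat n q ρ (i,a) (i,b)
          = (if a = b then marg n q ρ i a else 0) - marg n q ρ i a * marg n q ρ i b := by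
        intro a b
        unfold covMat
        rw [pairProb_diag]
      calc (∑ a, ∑ b, u (i,a) * covMat n q ρ (i,a) (i,b) * u (i,b))
          = ∑ a, ∑ b, (u (i,a) * (if a = b then marg n q ρ i a else 0) * u (i,b)
              - (marg n q ρ i a * u (i,a)) * (marg n q ρ i b * u (i,b))) := by
            refine Finset.sum_congr rfl fun a _ => Finset.sum_congr rfl fun b _ => ?_
            rw [hcd]
            ring
        _ = (∑ a, ∑ b, u (i,a) * (if a = b then marg n q ρ i a else 0) * u (i,b))
              - ∑ a, ∑ b, (marg n q ρ i a * u (i,a)) * (marg n q ρ i b * u (i,b)) := by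
            rw [← Finset.sum_sub_distrib]
            exact Finset.sum_congr rfl fun a _ => by rw [← Finset.sum_sub_distrib]
        _ = (∑ a, marg n q ρ i a * u (i,a) ^ 2)
              - (∑ a, marg n q ρ i a * u (i,a)) * (∑ b, marg n q ρ i b * u (i,b)) := by
            congr 1
            · refine Finset.sum_congr rfl fun a _ => ?_
              simp only [mul_ite, ite_mul, mul_zero, zero_mul, Finset.sum_ite_eq,
                Finset.mem_univ, if_pos]
              ring
            · rw [Finset.sum_mul_sum]
        _ = _ := by ring
    have hblock : (∑ p, ∑ p', u p * (if p.1 = p'.1 then covMat n q ρ p p' else 0) * u p')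
        ≤ (1/2) * (u ⬝ᵥ u) := by
      have hrw : (∑ p, ∑ p', u p * (if p.1 = p'.1 then covMat n q ρ p p' else 0) * u p')
          = ∑ i : Fin n, (∑ a, marg n q ρ i a * u (i,a) ^ 2
              - (∑ a, marg n q ρ i a * u (i,a)) ^ 2) := by
        rw [Fintype.sum_prod_type]
        refine Finset.sum_congr rfl fun i _ => ?_
        rw [← hblocki i]
        exact Finset.sum_congr rfl fun a _ => hinner i a
      rw [hrw]
      have hud : u ⬝ᵥ u = ∑ i : Fin n, ∑ a, u (i,a) ^ 2 := by
        simp only [dotProduct, Fintype.sum_prod_type]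
        exact Finset.sum_congr rfl fun i _ => Finset.sum_congr rfl fun a _ => (sq _).symm
      rw [hud, Finset.mul_sum]
      apply Finset.sum_le_sum
      intro i _
      exact var_bound (fun a => marg n q ρ i a) (fun a => u (i,a))
        (fun a => (hmarg i a).le) (sum_marg n q ρ hρ1 i)
    -- put everything together
    have hvv : v ⬝ᵥ v ≤ u ⬝ᵥ u := by
      apply Finset.sum_le_sum
      intro p _
      have hvp : v p * v p = marg n q ρ p.1 p.2 * (u p * u p) := by
        show eVec n q ρ p * u p * (eVec n q ρ p * u p) = _
        rw [← hesq p]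
        ring
      rw [hvp]
      have h1 : marg n q ρ p.1 p.2 ≤ 1 := marg_le_one n q ρ hρ hρ1 p.1 p.2
      exact mul_le_of_le_one_left (mul_self_nonneg (u p)) h1
    have huu : 0 ≤ u ⬝ᵥ u := Finset.sum_nonneg fun p _ => mul_self_nonneg (u p)
    calc u ⬝ᵥ (covMat n q ρ) *ᵥ u
        = v ⬝ᵥ (symMat n q ρ) *ᵥ v
          + ∑ p, ∑ p', u p * (if p.1 = p'.1 then covMat n q ρ p p' else 0) * u p' := hsplit
      _ ≤ K * (v ⬝ᵥ v) + (1/2) * (u ⬝ᵥ u) := add_le_add hquadS hblock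
      _ ≤ K * (u ⬝ᵥ u) + (1/2) * (u ⬝ᵥ u) := by
          have := mul_le_mul_of_nonneg_left hvv hK0
          linarith
      _ = (K + 1/2) * (u ⬝ᵥ u) := by ring
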